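/- For every ε > 0 there exists Q₀ such that for all real Q ≥ Q₀ and every nonempty finite set A of positive integers contained in [1, Q], the product set AA satisfies |AA| ≥ |A|²·exp((−2·log 2 − ε)·(log Q)/(log log Q)). -/

import Mathlib

open Finset Filter


private lemma aux_divisor_split (n K : ℕ) (hn : 1 ≤ n) (hK : 2 ≤ K) :
    (n.divisors.card : ℝ) ≤
      Real.exp (Real.log 2 * (Real.log n / Real.log K)) *
        (Real.log n / Real.log 2 + 1) ^ K := by
  have hn0 : n ≠ 0 := by omega
  have hlogn : 0 ≤ Real.log n := Real.log_natCast_nonneg n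
  have hlogK : 0 < Real.log K := by
    apply Real.log_pos; exact_mod_cast by omega
  set e := n.factorization with he
  set S := n.primeFactors with hS
  set S₁ := S.filter (fun p => K ≤ p) with hS₁
  set S₂ := S.filter (fun p => ¬ K ≤ p) with hS₂
  have hd : n.divisors.card = (∏ p ∈ S₁, (e p + 1)) * ∏ p ∈ S₂, (e p + 1) := by
    rw [Nat.card_divisors hn0, Finset.prod_filter_mul_prod_filter_not]
  -- the prime powers over S₁ divide n
  have hprod_dvd : ∏ p ∈ S₁, p ^ e p ∣ n := by
    have h1 : ∏ p ∈ S₁, p ^ e p ∣ ∏ p ∈ S, p ^ e p :=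
      Finset.prod_dvd_prod_of_subset _ _ _ (Finset.filter_subset _ _)
    have h2 : ∏ p ∈ S, p ^ e p = n := by
      have := Nat.factorization_prod_pow_eq_self hn0
      rwa [Finsupp.prod, Nat.support_factorization] at this
    rwa [h2] at h1
  have hKpow : K ^ (∑ p ∈ S₁, e p) ≤ n := by
    calc K ^ (∑ p ∈ S₁, e p) = ∏ p ∈ S₁, K ^ e p := (Finset.prod_pow_eq_pow_sum _ _ _).symm
    _ ≤ ∏ p ∈ S₁, p ^ e p := by
        apply Finset.prod_le_prod' -- maybe wrong name
        intro p hp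
        exact Nat.pow_le_pow_left (Finset.mem_filter.mp hp).2 _
    _ ≤ n := Nat.le_of_dvd (by omega) hprod_dvd
  have hsum : (∑ p ∈ S₁, e p : ℝ) ≤ Real.log n / Real.log K := by
    rw [le_div_iff₀ hlogK]
    have := Real.log_le_log (by positivity) (show ((K:ℝ)) ^ (∑ p ∈ S₁, e p) ≤ (n:ℝ) by exact_mod_cast hKpow)
    rw [Real.log_pow] at this
    push_cast at this ⊢
    linarith
  have hP1 : ((∏ p ∈ S₁, (e p + 1) : ℕ) : ℝ) ≤
      Real.exp (Real.log 2 * (Real.log n / Real.log K)) := by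
    have h1 : (∏ p ∈ S₁, (e p + 1) : ℕ) ≤ 2 ^ (∑ p ∈ S₁, e p) := by
      calc (∏ p ∈ S₁, (e p + 1) : ℕ) ≤ ∏ p ∈ S₁, 2 ^ e p := by
            apply Finset.prod_le_prod' -- name?
            intro p _
            exact Nat.lt_two_pow_self
      _ = 2 ^ (∑ p ∈ S₁, e p) := Finset.prod_pow_eq_pow_sum _ _ _
    have h2 : ((2:ℝ)) ^ (∑ p ∈ S₁, e p) = Real.exp ((∑ p ∈ S₁, e p : ℝ) * Real.log 2) := by
      rw [← Real.exp_log (show (0:ℝ) < 2 ^ (∑ p ∈ S₁, e p) by positivity), Real.log_pow]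
      congr 1
      push_cast
      ring
    calc ((∏ p ∈ S₁, (e p + 1) : ℕ) : ℝ) ≤ (2:ℝ) ^ (∑ p ∈ S₁, e p) := by exact_mod_cast h1
    _ = Real.exp ((∑ p ∈ S₁, e p : ℝ) * Real.log 2) := h2
    _ ≤ Real.exp (Real.log 2 * (Real.log n / Real.log K)) := by
        apply Real.exp_le_exp.mpr
        rw [mul_comm]
        exact mul_le_mul_of_nonneg_left hsum (Real.log_nonneg (by norm_num))
  have hM1 : (1:ℝ) ≤ Real.log n / Real.log 2 + 1 := by
    have : 0 ≤ Real.log n / Real.log 2 := div_nonneg hlogn (Real.log_nonneg (by norm_num))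
    linarith
  have hP2 : ((∏ p ∈ S₂, (e p + 1) : ℕ) : ℝ) ≤ (Real.log n / Real.log 2 + 1) ^ K := by
    have hfac : ∀ p ∈ S₂, ((e p + 1 : ℕ) : ℝ) ≤ Real.log n / Real.log 2 + 1 := by
      intro p hp
      have hpS : p ∈ S := (Finset.mem_filter.mp hp).1
      have hp2 : 2 ≤ p := (Nat.prime_of_mem_primeFactors hpS).two_le
      have hdvd : p ^ e p ∣ n := Nat.ordProj_dvd n p
      have h2n : 2 ^ e p ≤ n :=
        le_trans (Nat.pow_le_pow_left hp2 _) (Nat.le_of_dvd (by omega) hdvd)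
      have : (e p : ℝ) * Real.log 2 ≤ Real.log n := by
        have := Real.log_le_log (by positivity)
          (show ((2:ℝ)) ^ e p ≤ (n:ℝ) by exact_mod_cast h2n)
        rwa [Real.log_pow] at this
      have he' : (e p : ℝ) ≤ Real.log n / Real.log 2 := by
        rw [le_div_iff₀ (Real.log_pos (by norm_num))]; exact this
      push_cast
      linarith
    have hcard : S₂.card ≤ K := by
      have : S₂ ⊆ Finset.range K := by
        intro p hp
        simp only [Finset.mem_range]
        have := (Finset.mem_filter.mp hp).2
        omega
      simpa using Finset.card_le_card this
    calc ((∏ p ∈ S₂, (e p + 1) : ℕ) : ℝ) = ∏ p ∈ S₂, ((e p + 1 : ℕ) : ℝ) := by push_cast; ring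
    _ ≤ ∏ _p ∈ S₂, (Real.log n / Real.log 2 + 1) :=
        Finset.prod_le_prod (fun p _ => by positivity) hfac
    _ = (Real.log n / Real.log 2 + 1) ^ S₂.card := Finset.prod_const _
    _ ≤ (Real.log n / Real.log 2 + 1) ^ K := pow_le_pow_right₀ hM1 hcard
  calc (n.divisors.card : ℝ)
      = ((∏ p ∈ S₁, (e p + 1) : ℕ) : ℝ) * ((∏ p ∈ S₂, (e p + 1) : ℕ) : ℝ) := by
        rw [hd]; push_cast; ring
  _ ≤ Real.exp (Real.log 2 * (Real.log n / Real.log K)) * (Real.log n / Real.log 2 + 1) ^ K := by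
      apply mul_le_mul hP1 hP2 (by positivity) (Real.exp_pos _).le


set_option maxHeartbeats 1000000 in
private lemma aux_eventually (ε : ℝ) (hε : 0 < ε) :
    ∀ᶠ Q : ℝ in atTop, ∀ n : ℕ, 1 ≤ n → (n : ℝ) ≤ Q ^ 2 →
      (n.divisors.card : ℝ) ≤
        Real.exp ((2 * Real.log 2 + ε) * (Real.log Q / Real.log (Real.log Q))) := by
  have hl2 : 0 < Real.log 2 := Real.log_pos (by norm_num)
  set d : ℝ := 2 * Real.log 2 + ε / 2 with hd
  have hd0 : 0 < d := by positivity
  set c : ℝ := 2 * Real.log 2 / d with hc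
  have hc0 : 0 < c := by positivity
  have hc1 : c < 1 := by
    rw [hc, div_lt_one hd0, hd]; linarith
  -- eventual condition in x := log Q
  have hlittle : (fun x : ℝ => Real.log x ^ (2:ℝ)) =o[atTop] fun x => x ^ (1 - c) :=
    isLittleO_log_rpow_rpow_atTop 2 (by linarith)
  have h3 : ∀ᶠ x : ℝ in atTop, 4 * Real.log x ^ 2 ≤ ε / 2 * x ^ (1 - c) := by
    have h := hlittle.def (show (0:ℝ) < ε / 8 by positivity)
    filter_upwards [h, eventually_ge_atTop (1:ℝ)] with x hx hx1
    have hlx : 0 ≤ Real.log x := Real.log_nonneg hx1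
    have hxp : 0 ≤ x ^ (1 - c) := Real.rpow_nonneg (by linarith) _
    rw [Real.norm_eq_abs, Real.norm_eq_abs, abs_of_nonneg (Real.rpow_nonneg hlx _),
      abs_of_nonneg hxp, Real.rpow_two] at hx
    nlinarith
  have hcond : ∀ᶠ x : ℝ in atTop,
      (4 * Real.log x ^ 2 ≤ ε / 2 * x ^ (1 - c)) ∧ Real.log 2 ≤ c * Real.log x ∧ 4 ≤ x := by
    have h2 : ∀ᶠ x : ℝ in atTop, Real.log 2 ≤ c * Real.log x := by
      have : Tendsto (fun x : ℝ => c * Real.log x) atTop atTop :=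
        (Real.tendsto_log_atTop).const_mul_atTop hc0
      exact this.eventually_ge_atTop _
    filter_upwards [h3, h2, eventually_ge_atTop (4:ℝ)] with x a b c' using ⟨a, b, c'⟩
  filter_upwards [Real.tendsto_log_atTop.eventually hcond, eventually_ge_atTop (1:ℝ)]
    with Q hQ hQ1
  set x : ℝ := Real.log Q with hx
  obtain ⟨hA, hB, hC⟩ := hQ
  have hx4 : (4:ℝ) ≤ x := hC
  have hx1 : (1:ℝ) ≤ x := by linarith
  have hlx : 0 < Real.log x := Real.log_pos (by linarith)
  intro n hn hnQ
  have hlogn : 0 ≤ Real.log n := Real.log_natCast_nonneg n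
  have hlogn2x : Real.log n ≤ 2 * x := by
    have h0 : (0:ℝ) < n := by exact_mod_cast hn
    calc Real.log n ≤ Real.log (Q ^ 2) := Real.log_le_log h0 hnQ
    _ = 2 * x := by rw [Real.log_pow]; push_cast; ring
  set K : ℕ := ⌈Real.exp (c * Real.log x)⌉₊ with hK
  have hexp2 : (2:ℝ) ≤ Real.exp (c * Real.log x) := by
    calc (2:ℝ) = Real.exp (Real.log 2) := (Real.exp_log (by norm_num)).symm
    _ ≤ _ := Real.exp_le_exp.mpr hB
  have hK2 : 2 ≤ K := by
    have : (1:ℝ) < Real.exp (c * Real.log x) := by linarith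
    have := Nat.lt_ceil.mpr (by exact_mod_cast this : ((1:ℕ):ℝ) < Real.exp (c * Real.log x))
    omega
  have hKge : c * Real.log x ≤ Real.log K := by
    have h1 : Real.exp (c * Real.log x) ≤ (K:ℝ) := Nat.le_ceil _
    calc c * Real.log x = Real.log (Real.exp (c * Real.log x)) := (Real.log_exp _).symm
    _ ≤ Real.log K := Real.log_le_log (Real.exp_pos _) h1
  have hxc : Real.exp (c * Real.log x) = x ^ c := by
    rw [Real.rpow_def_of_pos (by linarith), mul_comm]
  have hxc1 : (1:ℝ) ≤ x ^ c := Real.one_le_rpow hx1 hc0.le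
  have hKle : (K:ℝ) ≤ x ^ c + 1 := by
    have h : ((⌈Real.exp (c * Real.log x)⌉₊ : ℕ) : ℝ) < Real.exp (c * Real.log x) + 1 :=
      Nat.ceil_lt_add_one (Real.exp_pos _).le
    rw [hK]
    linarith [hxc.le]
  clear_value d c K x
  have key := aux_divisor_split n K hn hK2
  have hclx : 0 < c * Real.log x := by positivity
  -- bound first factor
  have hF1 : Real.log 2 * (Real.log n / Real.log K) ≤ d * (x / Real.log x) := by
    have hdiv : Real.log n / Real.log K ≤ 2 * x / (c * Real.log x) :=
      div_le_div₀ (by linarith) hlogn2x hclx hKge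
    have heq : Real.log 2 * (2 * x / (c * Real.log x)) = d * (x / Real.log x) := by
      rw [hc]
      field_simp
    calc Real.log 2 * (Real.log n / Real.log K) ≤ Real.log 2 * (2 * x / (c * Real.log x)) :=
          mul_le_mul_of_nonneg_left hdiv hl2.le
    _ = d * (x / Real.log x) := heq
  -- bound second factor
  have hM4x : Real.log n / Real.log 2 + 1 ≤ 4 * x := by
    have h1 : Real.log n / Real.log 2 ≤ 2 * x / Real.log 2 := by
      gcongr
    have h2 : Real.log 2 ≥ 0.6931471803 := by
      have := Real.log_two_gt_d9
      linarith
    have h3 : 2 * x / Real.log 2 ≤ 3 * x := by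
      rw [div_le_iff₀ hl2]
      nlinarith
    linarith
  have hM1 : (1:ℝ) ≤ Real.log n / Real.log 2 + 1 := by
    have : 0 ≤ Real.log n / Real.log 2 := div_nonneg hlogn hl2.le
    linarith
  have hF2 : (Real.log n / Real.log 2 + 1) ^ K ≤ Real.exp (ε / 2 * (x / Real.log x)) := by
    have hKlog : (K:ℝ) * Real.log (4 * x) ≤ ε / 2 * (x / Real.log x) := by
      have hlog4x : Real.log (4 * x) ≤ 2 * Real.log x := by
        rw [Real.log_mul (by norm_num) (by linarith)]
        have : Real.log 4 ≤ Real.log x := Real.log_le_log (by norm_num) hx4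
        linarith
      have hlog4x0 : 0 ≤ Real.log (4 * x) := Real.log_nonneg (by linarith)
      have h1 : (K:ℝ) * Real.log (4 * x) ≤ (x ^ c + 1) * (2 * Real.log x) := by
        apply mul_le_mul hKle hlog4x hlog4x0 (by positivity)
      have h2 : (x ^ c + 1) * (2 * Real.log x) ≤ 4 * x ^ c * Real.log x := by
        have h2a : (x ^ c + 1) * (2 * Real.log x) ≤ (2 * x ^ c) * (2 * Real.log x) :=
          mul_le_mul_of_nonneg_right (by linarith) (by positivity)
        have h2b : (2 * x ^ c) * (2 * Real.log x) = 4 * x ^ c * Real.log x := by ring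
        linarith
      have h3 : 4 * x ^ c * Real.log x ≤ ε / 2 * (x / Real.log x) := by
        have heq : ε / 2 * (x / Real.log x) = (ε / 2 * x) / Real.log x := by ring
        rw [heq, le_div_iff₀ hlx]
        have hxx : x ^ (1 - c) * x ^ c = x := by
          rw [← Real.rpow_add (by linarith : (0:ℝ) < x)]
          norm_num
        calc 4 * x ^ c * Real.log x * Real.log x = (4 * Real.log x ^ 2) * x ^ c := by ring
        _ ≤ (ε / 2 * x ^ (1 - c)) * x ^ c := by
            apply mul_le_mul_of_nonneg_right hA (by positivity)
        _ = ε / 2 * x := by rw [mul_assoc, hxx]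
      linarith
    have hpos : (0:ℝ) < Real.log n / Real.log 2 + 1 := by linarith
    calc (Real.log n / Real.log 2 + 1) ^ K ≤ (4 * x) ^ K :=
          pow_le_pow_left₀ (by linarith) hM4x K
    _ = Real.exp ((K:ℝ) * Real.log (4 * x)) := by
        rw [← Real.log_pow, Real.exp_log (by positivity)]
    _ ≤ Real.exp (ε / 2 * (x / Real.log x)) := Real.exp_le_exp.mpr hKlog
  calc (n.divisors.card : ℝ)
      ≤ Real.exp (Real.log 2 * (Real.log n / Real.log K)) *
        (Real.log n / Real.log 2 + 1) ^ K := key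
  _ ≤ Real.exp (d * (x / Real.log x)) * Real.exp (ε / 2 * (x / Real.log x)) := by
      apply mul_le_mul (Real.exp_le_exp.mpr hF1) hF2 (by positivity) (Real.exp_pos _).le
  _ = Real.exp ((2 * Real.log 2 + ε) * (x / Real.log x)) := by
      rw [← Real.exp_add]
      congr 1
      rw [hd]
      ring


theorem stmt_3 :
    ∀ ε : ℝ, 0 < ε → ∃ Q₀ : ℝ, ∀ Q : ℝ, Q₀ ≤ Q →
      ∀ A : Finset ℕ, A.Nonempty → (∀ a ∈ A, 0 < a ∧ (a : ℝ) ≤ Q) →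
        (((A ×ˢ A).image (fun p => p.1 * p.2)).card : ℝ) ≥
          (A.card : ℝ) ^ 2 *
            Real.exp ((-2 * Real.log 2 - ε) *
              (Real.log Q / Real.log (Real.log Q))) := by
  intro ε hε
  obtain ⟨Q₀, hQ₀⟩ := Filter.eventually_atTop.mp
    ((aux_eventually ε hε).and (eventually_ge_atTop (1:ℝ)))
  refine ⟨Q₀, fun Q hQ A hA hAQ => ?_⟩
  obtain ⟨hdiv, hQ1⟩ := hQ₀ Q hQ
  set L : ℝ := Real.log Q / Real.log (Real.log Q) with hL
  set T := (A ×ˢ A).image (fun p : ℕ × ℕ => p.1 * p.2) with hT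
  set E : ℝ := Real.exp ((2 * Real.log 2 + ε) * L) with hE
  have hEpos : 0 < E := Real.exp_pos _
  have hmem : ∀ n ∈ T, 1 ≤ n ∧ (n : ℝ) ≤ Q ^ 2 := by
    intro n hn
    obtain ⟨p, hp, rfl⟩ := Finset.mem_image.mp hn
    obtain ⟨h1, h2⟩ := Finset.mem_product.mp hp
    refine ⟨?_, ?_⟩
    · have := (hAQ _ h1).1; have := (hAQ _ h2).1
      exact Nat.one_le_iff_ne_zero.mpr (Nat.mul_ne_zero (by omega) (by omega))
    · push_cast
      have ha := hAQ _ h1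
      have hb := hAQ _ h2
      have ha0 : (0:ℝ) ≤ (p.1 : ℝ) := by positivity
      calc ((p.1 : ℝ)) * p.2 ≤ Q * Q := by
            apply mul_le_mul ha.2 hb.2 (by positivity) (by linarith)
      _ = Q ^ 2 := (sq Q).symm
  -- fiberwise counting
  have hfib : (A ×ˢ A).card = ∑ n ∈ T, ((A ×ˢ A).filter (fun p => p.1 * p.2 = n)).card :=
    Finset.card_eq_sum_card_fiberwise (fun p hp => Finset.mem_image_of_mem _ hp)
  have hfibbound : ∀ n ∈ T,
      ((A ×ˢ A).filter (fun p => p.1 * p.2 = n)).card ≤ n.divisors.card := by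
    intro n hn
    apply Finset.card_le_card_of_injOn Prod.fst
    · intro p hp
      obtain ⟨hpA, hpn⟩ := Finset.mem_filter.mp hp
      rw [Finset.mem_coe, Nat.mem_divisors]
      exact ⟨⟨p.2, hpn.symm⟩, by have := (hmem n hn).1; omega⟩
    · intro p hp q hq hfst
      obtain ⟨hpA, hpn⟩ := Finset.mem_filter.mp (Finset.mem_coe.mp hp)
      obtain ⟨hqA, hqn⟩ := Finset.mem_filter.mp (Finset.mem_coe.mp hq)
      have hp1 : 0 < p.1 := (hAQ _ (Finset.mem_product.mp hpA).1).1
      have : p.1 * p.2 = p.1 * q.2 := by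
        rw [hpn, ← hqn, hfst]
      exact Prod.ext hfst (Nat.eq_of_mul_eq_mul_left hp1 this)
  have hcount : (A.card : ℝ) ^ 2 ≤ (T.card : ℝ) * E := by
    have h1 : (A.card) ^ 2 ≤ ∑ n ∈ T, n.divisors.card := by
      calc A.card ^ 2 = (A ×ˢ A).card := by rw [Finset.card_product]; ring
      _ = ∑ n ∈ T, ((A ×ˢ A).filter (fun p => p.1 * p.2 = n)).card := hfib
      _ ≤ ∑ n ∈ T, n.divisors.card := Finset.sum_le_sum hfibbound
    have h2 : (∑ n ∈ T, (n.divisors.card : ℝ)) ≤ (T.card : ℝ) * E := by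
      have := Finset.sum_le_card_nsmul T (fun n => ((n.divisors.card : ℕ) : ℝ)) E
        (fun n hn => hdiv n (hmem n hn).1 (hmem n hn).2)
      rwa [nsmul_eq_mul] at this
    calc (A.card : ℝ) ^ 2 ≤ ∑ n ∈ T, (n.divisors.card : ℝ) := by exact_mod_cast h1
    _ ≤ (T.card : ℝ) * E := h2
  have hneg : (-2 * Real.log 2 - ε) * L = -((2 * Real.log 2 + ε) * L) := by ring
  rw [ge_iff_le, hneg, Real.exp_neg, ← hE]
  calc (A.card : ℝ) ^ 2 * E⁻¹ ≤ ((T.card : ℝ) * E) * E⁻¹ :=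
        mul_le_mul_of_nonneg_right hcount (by positivity)
  _ = (T.card : ℝ) := by field_simp
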